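/- Let (G, B) be a nonsimple metric n-Lie algebra with dim G > 1 and J a nonzero minimal ideal of G. Then (1) J is either abelian (i.e., [J,J,G,...,G]=0) or simple; (2) J ⊆ [G,...,G] or J ⊆ C(G); (3) if H is another minimal ideal with H ≠ J, then [J,H,G,...,G] = 0. -/

import Mathlib

open scoped BigOperators

section NLiePreamble

variable {n : ℕ} {G : Type*} [AddCommGroup G] [Module ℂ G]

/-- The inner derivation `ad_y z = [y₁, …, y_{n+1}, z]` determined by an
`(n+2)`-ary alternating bracket. -/
def nAd (br : AlternatingMap ℂ G G (Fin (n + 2))) (y : Fin (n + 1) → G) (z : G) : G :=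
  br (Fin.snoc y z)

/-- The generalized Jacobi identity: the bracket makes `G` an `(n+2)`-Lie algebra. -/
def IsNLie (br : AlternatingMap ℂ G G (Fin (n + 2))) : Prop :=
  ∀ (x : Fin (n + 2) → G) (y : Fin (n + 1) → G),
    nAd br y (br x) = ∑ i, br (Function.update x i (nAd br y (x i)))

/-- A submodule `I` is an ideal: `[I, G, …, G] ⊆ I`. -/
def IsIdeal (br : AlternatingMap ℂ G G (Fin (n + 2))) (I : Submodule ℂ G) : Prop :=
  ∀ (y : Fin (n + 1) → G), ∀ x ∈ I, br (Fin.snoc y x) ∈ I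

/-- Invariance of a bilinear form under the bracket. -/
def IsInvariantForm (br : AlternatingMap ℂ G G (Fin (n + 2)))
    (K : LinearMap.BilinForm ℂ G) : Prop :=
  ∀ (x : Fin (n + 1) → G) (y₁ y₂ : G),
    K (br (Fin.snoc x y₁)) y₂ = - K (br (Fin.snoc x y₂)) y₁

/-- A metric on an `n`-Lie algebra: a nondegenerate invariant symmetric bilinear form. -/
def IsMetric (br : AlternatingMap ℂ G G (Fin (n + 2)))
    (B : LinearMap.BilinForm ℂ G) : Prop :=
  B.Nondegenerate ∧ (∀ x y : G, B x y = B y x) ∧ IsInvariantForm br B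

/-- The span `[W₁, …, W_{n+2}]` of all brackets with entries in the given subspaces. -/
def bracketSpan (br : AlternatingMap ℂ G G (Fin (n + 2)))
    (W : Fin (n + 2) → Submodule ℂ G) : Submodule ℂ G :=
  Submodule.span ℂ {z | ∃ w : Fin (n + 2) → G, (∀ i, w i ∈ W i) ∧ z = br w}

/-- The derived algebra `[G, …, G]`. -/
def derivedAlg (br : AlternatingMap ℂ G G (Fin (n + 2))) : Submodule ℂ G :=
  bracketSpan br fun _ => ⊤

/-- `[I, …, I]` for a subspace `I`. -/
def derivedStep (br : AlternatingMap ℂ G G (Fin (n + 2))) (I : Submodule ℂ G) :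
    Submodule ℂ G :=
  bracketSpan br fun _ => I

/-- `[J, H, G, …, G]` for subspaces `J, H`. -/
def pairBracket (br : AlternatingMap ℂ G G (Fin (n + 2))) (J H : Submodule ℂ G) :
    Submodule ℂ G :=
  bracketSpan br (Fin.cons J (Fin.cons H fun _ => (⊤ : Submodule ℂ G)))

/-- `[I, G, …, G]` for a subspace `I`. -/
def idealBracket (br : AlternatingMap ℂ G G (Fin (n + 2))) (I : Submodule ℂ G) :
    Submodule ℂ G :=
  bracketSpan br (Fin.cons I fun _ => (⊤ : Submodule ℂ G))

/-- The centralizer `C_G(I) = {x : [x, I, G, …, G] = 0}` of a subspace `I`. -/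
def centralizer (br : AlternatingMap ℂ G G (Fin (n + 2))) (I : Submodule ℂ G) :
    Submodule ℂ G where
  carrier := {x | ∀ v ∈ I, ∀ y : Fin n → G, br (Fin.cons x (Fin.cons v y)) = 0}
  add_mem' := by
    intro a b ha hb v hv y
    have := br.toMultilinearMap.cons_add (Fin.cons v y) a b
    simp only [AlternatingMap.coe_multilinearMap] at this
    rw [this, ha v hv y, hb v hv y, add_zero]
  zero_mem' := by
    intro v hv y
    have := br.toMultilinearMap.cons_smul (Fin.cons v y) (0 : ℂ) 0
    simpa using (br.toMultilinearMap.map_coord_zero (m := Fin.cons 0 (Fin.cons v y)) 0 rfl)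
  smul_mem' := by
    intro c a ha v hv y
    have := br.toMultilinearMap.cons_smul (Fin.cons v y) c a
    simp only [AlternatingMap.coe_multilinearMap] at this
    rw [this, ha v hv y, smul_zero]

/-- The center `C(G)`. -/
def center (br : AlternatingMap ℂ G G (Fin (n + 2))) : Submodule ℂ G :=
  centralizer br ⊤

/-- Nondegeneracy of `B` restricted to a subspace `W`. -/
def NondegOn (B : LinearMap.BilinForm ℂ G) (W : Submodule ℂ G) : Prop :=
  ∀ x ∈ W, (∀ y ∈ W, B x y = 0) → x = 0

/-- `(G, B)` is `B`-irreducible: no nontrivial nondegenerate ideals. -/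
def BIrreducible (br : AlternatingMap ℂ G G (Fin (n + 2)))
    (B : LinearMap.BilinForm ℂ G) : Prop :=
  ∀ I : Submodule ℂ G, IsIdeal br I → NondegOn B I → I = ⊥ ∨ I = ⊤

/-- `W` is a subalgebra. -/
def IsSubalgebra (br : AlternatingMap ℂ G G (Fin (n + 2))) (W : Submodule ℂ G) : Prop :=
  ∀ x : Fin (n + 2) → G, (∀ i, x i ∈ W) → br x ∈ W

/-- `I` is an ideal of the subalgebra `W`. -/
def IsIdealOf (br : AlternatingMap ℂ G G (Fin (n + 2))) (W I : Submodule ℂ G) : Prop :=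
  I ≤ W ∧ ∀ (y : Fin (n + 1) → G), (∀ i, y i ∈ W) → ∀ x ∈ I, br (Fin.snoc y x) ∈ I

/-- The subalgebra `W` is a simple `n`-Lie algebra. -/
def IsSimpleAlg (br : AlternatingMap ℂ G G (Fin (n + 2))) (W : Submodule ℂ G) : Prop :=
  derivedStep br W ≠ ⊥ ∧ ∀ I : Submodule ℂ G, IsIdealOf br W I → I = ⊥ ∨ I = W

/-- The subalgebra `W` is strong semisimple: a direct sum of simple ideals. -/
def IsStrongSemisimple (br : AlternatingMap ℂ G G (Fin (n + 2)))
    (W : Submodule ℂ G) : Prop :=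
  ∃ (m : ℕ) (S : Fin m → Submodule ℂ G),
    (∀ i, IsIdealOf br W (S i) ∧ IsSimpleAlg br (S i)) ∧
    iSupIndep S ∧ (⨆ i, S i) = W

/-- `I` is solvable (via the derived series). -/
def NLieSolvable (br : AlternatingMap ℂ G G (Fin (n + 2))) (I : Submodule ℂ G) : Prop :=
  ∃ k : ℕ, (derivedStep br)^[k] I = ⊥

/-- `R` is the radical: the maximal solvable ideal. -/
def NLieRadical (br : AlternatingMap ℂ G G (Fin (n + 2))) (R : Submodule ℂ G) : Prop :=
  IsIdeal br R ∧ NLieSolvable br R ∧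
    ∀ I : Submodule ℂ G, IsIdeal br I → NLieSolvable br I → I ≤ R

/-- A Levi decomposition `G = S ⊕ R`. -/
def IsLeviDecomp (br : AlternatingMap ℂ G G (Fin (n + 2)))
    (S R : Submodule ℂ G) : Prop :=
  NLieRadical br R ∧ IsSubalgebra br S ∧ IsStrongSemisimple br S ∧ IsCompl S R

/-- A minimal ideal of `G`. -/
def IsMinimalIdeal (br : AlternatingMap ℂ G G (Fin (n + 2))) (J : Submodule ℂ G) : Prop :=
  IsIdeal br J ∧ J ≠ ⊥ ∧
    ∀ I : Submodule ℂ G, IsIdeal br I → I ≤ J → I = ⊥ ∨ I = J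

/-- The socle: the sum of all minimal ideals. -/
def socle (br : AlternatingMap ℂ G G (Fin (n + 2))) : Submodule ℂ G :=
  sSup {J | IsMinimalIdeal br J}

/-- `H` is an `S`-submodule: `[S, …, S, H] ⊆ H`. -/
def IsSModule (br : AlternatingMap ℂ G G (Fin (n + 2))) (S H : Submodule ℂ G) : Prop :=
  ∀ (y : Fin (n + 1) → G), (∀ i, y i ∈ S) → ∀ x ∈ H, br (Fin.snoc y x) ∈ H

/-- `H` is an irreducible `S`-submodule. -/
def IsIrreducibleSModule (br : AlternatingMap ℂ G G (Fin (n + 2)))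
    (S H : Submodule ℂ G) : Prop :=
  IsSModule br S H ∧ H ≠ ⊥ ∧
    ∀ K : Submodule ℂ G, K ≤ H → IsSModule br S K → K = ⊥ ∨ K = H

/-- The space of invariant symmetric bilinear forms on `G`. -/
def invSymForms (br : AlternatingMap ℂ G G (Fin (n + 2))) :
    Submodule ℂ (LinearMap.BilinForm ℂ G) where
  carrier := {K | (∀ x y : G, K x y = K y x) ∧ IsInvariantForm br K}
  add_mem' := by
    rintro K L ⟨hK1, hK2⟩ ⟨hL1, hL2⟩
    refine ⟨fun x y => by simp [hK1 x y, hL1 x y], fun x y₁ y₂ => ?_⟩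
    simp only [LinearMap.add_apply]
    rw [hK2 x y₁ y₂, hL2 x y₁ y₂]; ring
  zero_mem' := ⟨fun x y => by simp, fun x y₁ y₂ => by simp⟩
  smul_mem' := by
    rintro c K ⟨hK1, hK2⟩
    refine ⟨fun x y => by simp [hK1 x y], fun x y₁ y₂ => ?_⟩
    simp only [LinearMap.smul_apply, smul_eq_mul]
    rw [hK2 x y₁ y₂]; ring

/-- The span of all nondegenerate invariant symmetric bilinear forms (the metric space `B(G)`). -/
def metricSpan (br : AlternatingMap ℂ G G (Fin (n + 2))) :
    Submodule ℂ (LinearMap.BilinForm ℂ G) :=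
  Submodule.span ℂ {K : LinearMap.BilinForm ℂ G | IsMetric br K}

/-- `Γ_B(G)`: `B`-self-adjoint elements of the centroid. -/
def centroidB (br : AlternatingMap ℂ G G (Fin (n + 2)))
    (B : LinearMap.BilinForm ℂ G) : Submodule ℂ (G →ₗ[ℂ] G) where
  carrier := {φ | (∀ (x : Fin (n + 1) → G) (z : G),
      φ (br (Fin.snoc x z)) = br (Fin.snoc x (φ z))) ∧
    ∀ x y : G, B (φ x) y = B x (φ y)}
  add_mem' := by
    rintro φ ψ ⟨hφ1, hφ2⟩ ⟨hψ1, hψ2⟩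
    constructor
    · intro x z
      have hadd := br.toMultilinearMap.snoc_add x (φ z) (ψ z)
      simp only [AlternatingMap.coe_multilinearMap] at hadd
      simp [hφ1 x z, hψ1 x z, hadd]
    · intro x y; simp [hφ2 x y, hψ2 x y]
  zero_mem' := by
    constructor
    · intro x z
      have h0 := br.toMultilinearMap.map_coord_zero (m := Fin.snoc x (0 : G)) (Fin.last _)
        (by simp)
      simp only [AlternatingMap.coe_multilinearMap] at h0
      simp [h0]
    · intro x y; simp
  smul_mem' := by
    rintro c φ ⟨hφ1, hφ2⟩
    constructor
    · intro x z
      have hs := br.toMultilinearMap.snoc_smul x c (φ z)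
      simp only [AlternatingMap.coe_multilinearMap] at hs
      simp [hφ1 x z, hs]
    · intro x y; simp [hφ2 x y]

end NLiePreamble

section Aux

variable {n : ℕ} {G : Type*} [AddCommGroup G] [Module ℂ G]

theorem swap_snoc (br : AlternatingMap ℂ G G (Fin (n + 2))) (w : Fin (n + 2) → G)
    (i : Fin (n + 2)) :
    br w = br (Fin.snoc (fun j => w (Equiv.swap i (Fin.last (n + 1)) j.castSucc)) (w i)) ∨
    br w = - br (Fin.snoc (fun j => w (Equiv.swap i (Fin.last (n + 1)) j.castSucc)) (w i)) := by
  set σ := Equiv.swap i (Fin.last (n + 1)) with hσ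
  have hw : (Fin.snoc (fun j => w (σ j.castSucc)) (w i) : Fin (n + 2) → G) = w ∘ σ := by
    funext j
    refine Fin.lastCases ?_ (fun k => ?_) j
    · simp [Fin.snoc_last, hσ, Equiv.swap_apply_right]
    · simp [Fin.snoc_castSucc]
  rw [hw, AlternatingMap.map_perm]
  rcases Int.units_eq_one_or (Equiv.Perm.sign σ) with h | h <;> rw [h]
  · left; simp
  · right; simp

theorem ideal_mem {br : AlternatingMap ℂ G G (Fin (n + 2))} {I : Submodule ℂ G}
    (hI : IsIdeal br I) (w : Fin (n + 2) → G) (i : Fin (n + 2)) (hw : w i ∈ I) :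
    br w ∈ I := by
  rcases swap_snoc br w i with h | h <;> rw [h]
  · exact hI _ _ hw
  · exact I.neg_mem (hI _ _ hw)

theorem zero_of_two {br : AlternatingMap ℂ G G (Fin (n + 2))} {J P : Submodule ℂ G}
    (hJ : IsIdeal br J) (hP : IsIdeal br P) (hJP : J ⊓ P = ⊥)
    (w : Fin (n + 2) → G) (i j : Fin (n + 2)) (hi : w i ∈ J) (hj : w j ∈ P) :
    br w = 0 := by
  have h1 : br w ∈ J ⊓ P := ⟨ideal_mem hJ w i hi, ideal_mem hP w j hj⟩
  rw [hJP] at h1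
  exact h1

theorem cons_one_eq {H : Submodule ℂ G} (J : Submodule ℂ G) :
    (Fin.cons J (Fin.cons H fun _ => (⊤ : Submodule ℂ G)) : Fin (n + 2) → Submodule ℂ G) 1 = H := by
  rw [show (1 : Fin (n + 2)) = Fin.succ 0 from (Fin.succ_zero_eq_one' (n := n + 1)).symm,
    Fin.cons_succ, Fin.cons_zero]

theorem pairBracket_le {br : AlternatingMap ℂ G G (Fin (n + 2))} {J H K : Submodule ℂ G}
    (h : ∀ w : Fin (n + 2) → G, w 0 ∈ J → w 1 ∈ H → br w ∈ K) :
    pairBracket br J H ≤ K := by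
  refine Submodule.span_le.mpr ?_
  rintro z ⟨w, hw, rfl⟩
  refine h w ?_ ?_
  · have := hw 0; rwa [Fin.cons_zero] at this
  · have := hw 1; rwa [cons_one_eq] at this

theorem mem_pairBracket {br : AlternatingMap ℂ G G (Fin (n + 2))} {J H : Submodule ℂ G}
    (w : Fin (n + 2) → G) (h0 : w 0 ∈ J) (h1 : w 1 ∈ H) : br w ∈ pairBracket br J H := by
  refine Submodule.subset_span ⟨w, fun i => ?_, rfl⟩
  refine Fin.cases ?_ (fun k => ?_) i
  · rwa [Fin.cons_zero]
  · refine Fin.cases ?_ (fun m => ?_) k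
    · rw [Fin.cons_succ, Fin.cons_zero]; exact h1
    · rw [Fin.cons_succ, Fin.cons_succ]; trivial

theorem mem_idealBracket {br : AlternatingMap ℂ G G (Fin (n + 2))} {J : Submodule ℂ G}
    (w : Fin (n + 2) → G) (h0 : w 0 ∈ J) : br w ∈ idealBracket br J := by
  refine Submodule.subset_span ⟨w, fun i => ?_, rfl⟩
  refine Fin.cases ?_ (fun k => ?_) i
  · rwa [Fin.cons_zero]
  · rw [Fin.cons_succ]; trivial

theorem snoc_zero' (br : AlternatingMap ℂ G G (Fin (n + 2))) (y : Fin (n + 1) → G) :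
    br (Fin.snoc y (0 : G)) = 0 :=
  br.toMultilinearMap.map_coord_zero (m := Fin.snoc y 0) (Fin.last (n + 1)) (by simp)

theorem orthogonal_isIdeal {br : AlternatingMap ℂ G G (Fin (n + 2))}
    {B : LinearMap.BilinForm ℂ G} (hB : IsMetric br B) {J : Submodule ℂ G}
    (hJ : IsIdeal br J) : IsIdeal br (B.orthogonal J) := by
  intro y x hx
  rw [LinearMap.BilinForm.mem_orthogonal_iff]
  intro j hj
  show B j (br (Fin.snoc y x)) = 0
  rw [hB.2.1 j (br (Fin.snoc y x)), hB.2.2 y x j]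
  have := hx (br (Fin.snoc y j)) (hJ y j hj)
  rw [show B (br (Fin.snoc y j)) x = 0 from this, neg_zero]

theorem inf_isIdeal {br : AlternatingMap ℂ G G (Fin (n + 2))} {J P : Submodule ℂ G}
    (hJ : IsIdeal br J) (hP : IsIdeal br P) : IsIdeal br (J ⊓ P) :=
  fun y x hx => ⟨hJ y x hx.1, hP y x hx.2⟩

theorem idealBracket_isIdeal {br : AlternatingMap ℂ G G (Fin (n + 2))} (hLie : IsNLie br)
    {J : Submodule ℂ G} (hJ : IsIdeal br J) : IsIdeal br (idealBracket br J) := by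
  intro y x hx
  induction hx using Submodule.span_induction with
  | mem z hz =>
    obtain ⟨w, hw, rfl⟩ := hz
    have h0 : w 0 ∈ J := by have := hw 0; rwa [Fin.cons_zero] at this
    have hJac : br (Fin.snoc y (br w)) =
        ∑ i, br (Function.update w i (br (Fin.snoc y (w i)))) := hLie w y
    rw [hJac]
    refine Submodule.sum_mem _ fun i _ => ?_
    refine mem_idealBracket _ ?_
    by_cases h : i = 0
    · subst h
      rw [Function.update_self]
      exact hJ y (w 0) h0
    · rw [Function.update_of_ne (Ne.symm h)]
      exact h0
  | zero => rw [snoc_zero']; exact Submodule.zero_mem _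
  | add a b _ _ ha hb =>
    have := br.toMultilinearMap.snoc_add y a b
    simp only [AlternatingMap.coe_multilinearMap] at this
    rw [this]
    exact Submodule.add_mem _ ha hb
  | smul c a _ ha =>
    have := br.toMultilinearMap.snoc_smul y c a
    simp only [AlternatingMap.coe_multilinearMap] at this
    rw [this]
    exact Submodule.smul_mem _ c ha

theorem idealBracket_le {br : AlternatingMap ℂ G G (Fin (n + 2))} {J : Submodule ℂ G}
    (hJ : IsIdeal br J) : idealBracket br J ≤ J := by
  refine Submodule.span_le.mpr ?_
  rintro z ⟨w, hw, rfl⟩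
  have h0 : w 0 ∈ J := by have := hw 0; rwa [Fin.cons_zero] at this
  exact ideal_mem hJ w 0 h0

end Aux


variable {n : ℕ} {G : Type*} [AddCommGroup G] [Module ℂ G]

theorem minimal_ideal_structure
    (br : AlternatingMap ℂ G G (Fin (n + 2))) (hLie : IsNLie br)
    [FiniteDimensional ℂ G]
    (B : LinearMap.BilinForm ℂ G) (hB : IsMetric br B)
    (hns : ¬ IsSimpleAlg br (⊤ : Submodule ℂ G))
    (hdim : 1 < Module.finrank ℂ G)
    (J : Submodule ℂ G) (hJ : IsMinimalIdeal br J) :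
    (pairBracket br J J = ⊥ ∨ IsSimpleAlg br J) ∧
    (J ≤ derivedAlg br ∨ J ≤ center br) ∧
    (∀ H : Submodule ℂ G, IsMinimalIdeal br H → H ≠ J →
      pairBracket br J H = ⊥) := by
  obtain ⟨hJid, hJne, hJmin⟩ := hJ
  have hsymm := hB.2.1
  have hinv := hB.2.2
  set P := B.orthogonal J with hPdef
  have hPid : IsIdeal br P := orthogonal_isIdeal hB hJid
  refine ⟨?_, ?_, ?_⟩
  · -- Part (1): abelian or simple
    by_cases hsub : J ≤ P
    · -- isotropic case: abelian
      left
      refine le_bot_iff.mp (pairBracket_le fun w h0 h1 => ?_)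
      rw [Submodule.mem_bot]
      refine hB.1.1 (br w) fun g => ?_
      set σ := Equiv.swap (1 : Fin (n + 2)) (Fin.last (n + 1)) with hσ
      set x : Fin (n + 1) → G := fun j => w (σ j.castSucc) with hxdef
      have hx0 : x 0 ∈ J := by
        have hσ0 : σ (Fin.castSucc 0) = 0 := by
          rw [Fin.castSucc_zero]
          refine Equiv.swap_apply_of_ne_of_ne ?_ ?_
          · exact fun h => by simpa using congrArg Fin.val h
          · exact fun h => by simpa using congrArg Fin.val h
        rw [hxdef]
        show w (σ (Fin.castSucc 0)) ∈ J; rw [hσ0]; exact h0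
      have hkey : B (br (Fin.snoc x (w 1))) g = 0 := by
        rw [hinv x (w 1) g]
        have hmem : br (Fin.snoc x g) ∈ J :=
          ideal_mem hJid (Fin.snoc x g) (Fin.castSucc 0)
            (by rw [Fin.snoc_castSucc]; exact hx0)
        have : B (br (Fin.snoc x g)) (w 1) = 0 := (hsub h1) _ hmem
        rw [this, neg_zero]
      rcases swap_snoc br w 1 with h | h <;> rw [h]
      · exact hkey
      · rw [LinearMap.map_neg₂, neg_eq_zero]; exact hkey
    · -- nondegenerate case
      have hJP : J ⊓ P = ⊥ := by
        rcases hJmin (J ⊓ P) (inf_isIdeal hJid hPid) inf_le_left with h | h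
        · exact h
        · exact absurd (inf_eq_left.mp h) hsub
      have hrefl : B.IsRefl := fun a b h => by rw [hsymm b a]; exact h
      have hrestr : (B.restrict J).Nondegenerate := by
        refine (LinearMap.IsRefl.nondegenerate_iff_separatingLeft (B := B.restrict J) (fun a b h =>
          hrefl (a : G) (b : G) h)).mpr ?_
        intro x hx
        have hxP : (x : G) ∈ P := by
          rw [hPdef, LinearMap.BilinForm.mem_orthogonal_iff]
          intro j hj
          have := hx ⟨j, hj⟩
          rw [LinearMap.BilinForm.restrict_apply] at this
          show B j (x : G) = 0
          rw [hsymm j (x : G)]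
          exact this
        have hmem : (x : G) ∈ J ⊓ P := ⟨x.2, hxP⟩
        rw [hJP, Submodule.mem_bot] at hmem
        exact Subtype.ext hmem
      have hcompl : IsCompl J P :=
        LinearMap.BilinForm.isCompl_orthogonal_of_restrict_nondegenerate hrefl hrestr
      have hdecomp : ∀ g : G, ∃ a ∈ J, ∃ b ∈ P, g = a + b := by
        intro g
        have hg : g ∈ J ⊔ P := by rw [hcompl.sup_eq_top]; trivial
        obtain ⟨a, ha, b, hb, hab⟩ := Submodule.mem_sup.mp hg
        exact ⟨a, ha, b, hb, hab.symm⟩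
      by_cases hder : derivedStep br J = ⊥
      · -- abelian
        left
        refine le_bot_iff.mp (pairBracket_le fun w h0 h1 => ?_)
        rw [Submodule.mem_bot]
        choose a ha b hb hab using fun i => hdecomp (w i)
        classical
        set m : Fin (n + 2) → G := fun i => if i = 0 ∨ i = 1 then w i else a i with hm
        set m' : Fin (n + 2) → G := fun i => if i = 0 ∨ i = 1 then 0 else b i with hm'
        have hw : w = m + m' := by
          funext i
          by_cases h : i = 0 ∨ i = 1 <;> simp [hm, hm', h, hab i]
        rw [hw]
        rw [show br (m + m') = ∑ s : Finset (Fin (n + 2)),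
            br (s.piecewise m m') from br.toMultilinearMap.map_add_univ m m']
        refine Finset.sum_eq_zero fun t _ => ?_
        by_cases h0t : (0 : Fin (n + 2)) ∈ t
        · by_cases h1t : (1 : Fin (n + 2)) ∈ t
          · by_cases huniv : t = Finset.univ
            · subst huniv
              rw [Finset.piecewise_univ]
              have hmem : br m ∈ derivedStep br J := by
                refine Submodule.subset_span ⟨m, fun i => ?_, rfl⟩
                by_cases h : i = 0 ∨ i = 1
                · rcases h with h | h <;> subst h <;> simp [hm] <;> assumption
                · simp [hm, h]; exact ha i
              rwa [hder, Submodule.mem_bot] at hmem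
            · obtain ⟨i, hi⟩ : ∃ i, i ∉ t := by
                by_contra hc
                push_neg at hc
                exact huniv (Finset.eq_univ_iff_forall.mpr hc)
              refine zero_of_two hJid hPid hJP _ 0 i ?_ ?_
              · rw [Finset.piecewise_eq_of_mem _ _ _ h0t]
                simp only [hm, if_pos (Or.inl rfl)]
                exact h0
              · rw [Finset.piecewise_eq_of_notMem _ _ _ hi]
                have hne : ¬(i = 0 ∨ i = 1) := by
                  rintro (h | h) <;> subst h <;> [exact hi h0t; exact hi h1t]
                simp only [hm', if_neg hne]
                exact hb i
          · have hz : (t.piecewise m m') 1 = 0 := by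
              rw [Finset.piecewise_eq_of_notMem _ _ _ h1t]
              simp [hm']
            exact br.toMultilinearMap.map_coord_zero _ hz
        · have hz : (t.piecewise m m') 0 = 0 := by
            rw [Finset.piecewise_eq_of_notMem _ _ _ h0t]
            simp [hm']
          exact br.toMultilinearMap.map_coord_zero _ hz
      · -- simple
        right
        refine ⟨hder, fun I hIJ => ?_⟩
        have hIid : IsIdeal br I := by
          intro y x hx
          choose a ha b hb hab using fun i => hdecomp (y i)
          classical
          have hsnoc : (Fin.snoc y x : Fin (n + 2) → G) =
              Fin.snoc a x + Fin.snoc b (0 : G) := by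
            funext j
            refine Fin.lastCases ?_ (fun k => ?_) j
            · simp
            · simp [hab k]
          rw [hsnoc]
          rw [show br (Fin.snoc a x + Fin.snoc b (0 : G)) = ∑ s : Finset (Fin (n + 2)),
              br (s.piecewise (Fin.snoc a x) (Fin.snoc b (0 : G))) from
            br.toMultilinearMap.map_add_univ _ _]
          refine Submodule.sum_mem _ fun t _ => ?_
          by_cases hlast : Fin.last (n + 1) ∈ t
          · by_cases huniv : t = Finset.univ
            · subst huniv
              rw [Finset.piecewise_univ]
              exact hIJ.2 a ha x hx
            · obtain ⟨i, hi⟩ : ∃ i, i ∉ t := by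
                by_contra hc
                push_neg at hc
                exact huniv (Finset.eq_univ_iff_forall.mpr hc)
              have hz : br (t.piecewise (Fin.snoc a x) (Fin.snoc b (0 : G))) = 0 := by
                refine zero_of_two hJid hPid hJP _ (Fin.last (n + 1)) i ?_ ?_
                · rw [Finset.piecewise_eq_of_mem _ _ _ hlast, Fin.snoc_last]
                  exact hIJ.1 hx
                · rw [Finset.piecewise_eq_of_notMem _ _ _ hi]
                  have hne : i ≠ Fin.last (n + 1) := fun h => hi (h ▸ hlast)
                  obtain ⟨k, rfl⟩ := Fin.exists_castSucc_eq.mpr hne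
                  rw [Fin.snoc_castSucc]
                  exact hb k
              rw [hz]
              exact Submodule.zero_mem _
          · have hz : (t.piecewise (Fin.snoc a x) (Fin.snoc b (0 : G)) : Fin (n + 2) → G) (Fin.last (n + 1)) = 0 := by
              rw [Finset.piecewise_eq_of_notMem _ _ _ hlast, Fin.snoc_last]
            have := br.toMultilinearMap.map_coord_zero
              (m := t.piecewise (Fin.snoc a x) (Fin.snoc b (0 : G))) _ hz
            rw [show br (t.piecewise (Fin.snoc a x) (Fin.snoc b (0 : G))) = 0 from this]
            exact Submodule.zero_mem _
        exact hJmin I hIid hIJ.1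
  · -- Part (2): J ≤ derivedAlg or J ≤ center
    rcases hJmin (idealBracket br J) (idealBracket_isIdeal hLie hJid)
        (idealBracket_le hJid) with h | h
    · right
      intro x hx
      show ∀ v ∈ (⊤ : Submodule ℂ G), ∀ y : Fin n → G, br (Fin.cons x (Fin.cons v y)) = 0
      intro v _ y
      have hmem : br (Fin.cons x (Fin.cons v y)) ∈ idealBracket br J :=
        mem_idealBracket _ (by rw [Fin.cons_zero]; exact hx)
      rwa [h, Submodule.mem_bot] at hmem
    · left
      rw [← h]
      refine Submodule.span_le.mpr ?_
      rintro z ⟨w, _, rfl⟩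
      exact Submodule.subset_span ⟨w, fun i => trivial, rfl⟩
  · -- Part (3)
    intro H hH hne
    obtain ⟨hHid, hHne, hHmin⟩ := hH
    have hJH : J ⊓ H = ⊥ := by
      rcases hHmin (J ⊓ H) (inf_isIdeal hJid hHid) inf_le_right with h | h
      · exact h
      · exfalso
        have hHJ : H ≤ J := h ▸ inf_le_left
        rcases hJmin H hHid hHJ with h' | h'
        · exact hHne h'
        · exact hne h'
    refine le_bot_iff.mp (pairBracket_le fun w h0 h1 => ?_)
    rw [Submodule.mem_bot]
    exact zero_of_two hJid hHid hJH w 0 1 h0 h1
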